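/- arXiv:1709.06887 — 2 statements merged into one kernel-verified Lean document; each statement's English description precedes it below -/
import Mathlib

section
/- In the setting of the previous theorem, the eigenvalue approximation bound ∑_{i=1}^k (|λᵢ| - |q(Cᵢ)|)² ≤ s² ∑_{i=1}^k λᵢ² holds, where s = sin(M,H(X)) = ‖M - H‖_F/‖M‖_F. -/
open Matrix Finset

lemma filter_lt_eq_map' (N m : ℕ) (hm : m ≤ N) :
    (univ.filter (fun j : Fin N => (j:ℕ) < m)) =
      Finset.map (Fin.castLEOrderEmb hm).toEmbedding univ := by
  ext j
  simp only [mem_filter, mem_univ, true_and, Finset.mem_map, Fin.castLEOrderEmb_toEmbedding]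
  constructor
  · intro h; exact ⟨⟨j, h⟩, rfl⟩
  · rintro ⟨i, rfl⟩; exact i.isLt

lemma card_filter_lt' (N m : ℕ) (hm : m ≤ N) :
    (univ.filter (fun j : Fin N => (j:ℕ) < m)).card = m := by
  rw [filter_lt_eq_map' N m hm, Finset.card_map, Finset.card_univ, Fintype.card_fin]

lemma sum_filter_lt_eq' (N m : ℕ) (hm : m ≤ N) (f : Fin N → ℝ) :
    ∑ j ∈ univ.filter (fun j : Fin N => (j:ℕ) < m), f j = ∑ i : Fin m, f (Fin.castLE hm i) := by
  rw [filter_lt_eq_map' N m hm, Finset.sum_map]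
  rfl

lemma sum_range_dite' (N m : ℕ) (hm : m ≤ N) (f : Fin N → ℝ) :
    ∑ i ∈ Finset.range m, (if h : i < N then f ⟨i, h⟩ else 0) =
      ∑ j ∈ univ.filter (fun j : Fin N => (j:ℕ) < m), f j := by
  rw [sum_filter_lt_eq' N m hm f, ← Fin.sum_univ_eq_sum_range]
  refine Finset.sum_congr rfl fun i _ => ?_
  rw [dif_pos (lt_of_lt_of_le i.isLt hm)]
  rfl

lemma abel_lemma' : ∀ (k : ℕ) (a b : ℕ → ℝ), (∀ i, i < k → 0 ≤ b i) →
    (∀ i j, i ≤ j → j < k → b j ≤ b i) →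
    (∀ m, m ≤ k → ∑ i ∈ Finset.range m, b i ≤ ∑ i ∈ Finset.range m, a i) →
    0 ≤ ∑ i ∈ Finset.range k, (a i - b i) * b i
  | 0, a, b, _, _, _ => by simp
  | (k+1), a, b, hb0, hbm, hmaj => by
    have key : ∑ i ∈ Finset.range (k+1), (a i - b i) * b i
        = (∑ i ∈ Finset.range (k+1), ((a i - b k) - (b i - b k)) * (b i - b k))
          + (∑ i ∈ Finset.range (k+1), (a i - b i)) * b k := by
      rw [Finset.sum_mul, ← Finset.sum_add_distrib]
      exact Finset.sum_congr rfl fun i _ => by ring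
    rw [key]
    have h1 : 0 ≤ ∑ i ∈ Finset.range (k+1), ((a i - b k) - (b i - b k)) * (b i - b k) := by
      rw [Finset.sum_range_succ]
      have hlast : ((a k - b k) - (b k - b k)) * (b k - b k) = 0 := by ring
      rw [hlast, add_zero]
      apply abel_lemma' k (fun i => a i - b k) (fun i => b i - b k)
      · intro i hi
        have := hbm i k (le_of_lt hi) (Nat.lt_succ_self k)
        linarith
      · intro i j hij hj
        have := hbm i j hij (Nat.lt_succ_of_lt hj)
        linarith
      · intro m hm
        rw [Finset.sum_sub_distrib, Finset.sum_sub_distrib]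
        have := hmaj m (Nat.le_succ_of_le hm)
        linarith
    have h2 : 0 ≤ (∑ i ∈ Finset.range (k+1), (a i - b i)) * b k := by
      apply mul_nonneg _ (hb0 k (Nat.lt_succ_self k))
      rw [Finset.sum_sub_distrib]
      have := hmaj (k+1) le_rfl
      linarith
    linarith

lemma rearr' (N m : ℕ) (hm : m ≤ N) (a c : Fin N → ℝ)
    (ham : ∀ i j : Fin N, i ≤ j → a j ≤ a i) (ha0 : ∀ j, 0 ≤ a j)
    (hc0 : ∀ j, 0 ≤ c j) (hc1 : ∀ j, c j ≤ 1) (hcs : ∑ j, c j = (m : ℝ)) :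
    ∑ j, a j * c j ≤ ∑ j ∈ univ.filter (fun j : Fin N => (j:ℕ) < m), a j := by
  rcases m with _ | m'
  · have hz := (Finset.sum_eq_zero_iff_of_nonneg (fun j (_ : j ∈ univ) => hc0 j)).mp
      (by simpa using hcs)
    have h0 : ∑ j, a j * c j = 0 :=
      Finset.sum_eq_zero fun j _ => by rw [hz j (mem_univ j), mul_zero]
    rw [h0]
    exact Finset.sum_nonneg fun j _ => ha0 j
  · have hm' : m' < N := hm
    set t := a ⟨m', hm'⟩ with ht
    set p := fun j : Fin N => (j : ℕ) < m' + 1 with hp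
    have hsplit := Finset.sum_filter_add_sum_filter_not univ p (fun j => a j * c j)
    have hsplitc := Finset.sum_filter_add_sum_filter_not univ p c
    have hcard : (univ.filter p).card = m' + 1 := card_filter_lt' N (m' + 1) hm
    have h1 : ∑ j ∈ univ.filter p, a j * c j
        ≤ (∑ j ∈ univ.filter p, a j) + t * (∑ j ∈ univ.filter p, c j - (m' + 1 : ℝ)) := by
      have hterm : ∀ j ∈ univ.filter p, a j * c j ≤ a j + t * (c j - 1) := by
        intro j hj
        have hjm : (j : ℕ) < m' + 1 := (mem_filter.mp hj).2
        have hjle : j ≤ (⟨m', hm'⟩ : Fin N) := by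
          simp only [Fin.le_def, Fin.val_mk]; omega
        have hat : t ≤ a j := ham j ⟨m', hm'⟩ hjle
        nlinarith [hc1 j, hc0 j]
      calc ∑ j ∈ univ.filter p, a j * c j ≤ ∑ j ∈ univ.filter p, (a j + t * (c j - 1)) :=
              Finset.sum_le_sum hterm
        _ = (∑ j ∈ univ.filter p, a j) + t * (∑ j ∈ univ.filter p, c j - (m' + 1 : ℝ)) := by
              rw [Finset.sum_add_distrib, ← Finset.mul_sum, Finset.sum_sub_distrib,
                Finset.sum_const, hcard]
              ring
    have h2 : ∑ j ∈ univ.filter (fun j => ¬ p j), a j * c j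
        ≤ t * ∑ j ∈ univ.filter (fun j => ¬ p j), c j := by
      rw [Finset.mul_sum]
      apply Finset.sum_le_sum
      intro j hj
      have hjm : ¬ ((j : ℕ) < m' + 1) := (mem_filter.mp hj).2
      have hjle : (⟨m', hm'⟩ : Fin N) ≤ j := by
        simp only [Fin.le_def, Fin.val_mk]; omega
      exact mul_le_mul_of_nonneg_right (ham _ j hjle) (hc0 j)
    have hkey : t * (∑ j ∈ univ.filter p, c j - (m' + 1 : ℝ))
        + t * ∑ j ∈ univ.filter (fun j => ¬ p j), c j = 0 := by
      rw [hcs] at hsplitc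
      push_cast at hsplitc
      have hneg : (∑ j ∈ univ.filter p, c j - (m' + 1 : ℝ))
          = -∑ j ∈ univ.filter (fun j => ¬ p j), c j := by linarith
      rw [hneg]; ring
    calc ∑ j, a j * c j
        = (∑ j ∈ univ.filter p, a j * c j) + ∑ j ∈ univ.filter (fun j => ¬ p j), a j * c j :=
          hsplit.symm
      _ ≤ ∑ j ∈ univ.filter p, a j := by linarith

lemma double_sum_prod' {R C A B : Type*} [Fintype R] [Fintype C] [Fintype A] [Fintype B]
    (f : A → R → ℝ) (g : A → C → ℝ) (f' : B → R → ℝ) (g' : B → C → ℝ) :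
    ∑ r : R, ∑ c : C, (∑ a : A, f a r * g a c) * (∑ b : B, f' b r * g' b c)
      = ∑ a : A, ∑ b : B, (∑ r : R, f a r * f' b r) * (∑ c : C, g a c * g' b c) := by
  calc ∑ r : R, ∑ c : C, (∑ a : A, f a r * g a c) * (∑ b : B, f' b r * g' b c)
      = ∑ r : R, ∑ c : C, ∑ a : A, ∑ b : B, (f a r * f' b r) * (g a c * g' b c) := by
        refine Finset.sum_congr rfl fun r _ => Finset.sum_congr rfl fun c _ => ?_
        rw [Finset.sum_mul_sum]
        exact Finset.sum_congr rfl fun a _ => Finset.sum_congr rfl fun b _ => by ring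
    _ = ∑ r : R, ∑ a : A, ∑ c : C, ∑ b : B, (f a r * f' b r) * (g a c * g' b c) :=
        Finset.sum_congr rfl fun r _ => Finset.sum_comm
    _ = ∑ a : A, ∑ r : R, ∑ c : C, ∑ b : B, (f a r * f' b r) * (g a c * g' b c) :=
        Finset.sum_comm
    _ = ∑ a : A, ∑ r : R, ∑ b : B, ∑ c : C, (f a r * f' b r) * (g a c * g' b c) :=
        Finset.sum_congr rfl fun a _ => Finset.sum_congr rfl fun r _ => Finset.sum_comm
    _ = ∑ a : A, ∑ b : B, ∑ r : R, ∑ c : C, (f a r * f' b r) * (g a c * g' b c) :=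
        Finset.sum_congr rfl fun a _ => Finset.sum_comm
    _ = ∑ a : A, ∑ b : B, (∑ r : R, f a r * f' b r) * (∑ c : C, g a c * g' b c) := by
        refine Finset.sum_congr rfl fun a _ => Finset.sum_congr rfl fun b _ => ?_
        rw [Finset.sum_mul_sum]

set_option maxHeartbeats 2000000 in
/-- Second claim of Theorem `sigma_approx`:
`∑_{i≤k} (|λᵢ| - |qᵢ|)² ≤ s² ∑_{i≤k} λᵢ²`. -/
theorem sigma_approx_eigenvalue_approx
    (n k : ℕ) (hk : k ≤ n)
    (U : Matrix (Fin n) (Fin n) ℝ) (hU : Uᵀ * U = 1)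
    (lam : Fin n → ℝ)
    (hmono : ∀ i j : Fin n, i ≤ j → |lam j| ≤ |lam i|)
    (M : Matrix (Fin n) (Fin n) ℝ)
    (hM : M = U * Matrix.diagonal lam * Uᵀ) (hM0 : M ≠ 0)
    (X : Matrix (Fin n) (Fin k) ℝ) (hX : Xᵀ * X = 1)
    (q : Fin k → ℝ)
    (hq : ∀ i : Fin k, q i = (fun r => X r i) ⬝ᵥ (M *ᵥ fun r => X r i))
    (hqmono : ∀ i j : Fin k, i ≤ j → |q j| ≤ |q i|)
    (H : Matrix (Fin n) (Fin n) ℝ)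
    (hH : H = ∑ i : Fin k, q i • vecMulVec (fun r => X r i) (fun r => X r i))
    (s : ℝ)
    (hs : s = Real.sqrt (∑ r, ∑ c', (M r c' - H r c') ^ 2) / Real.sqrt (∑ r, ∑ c', (M r c') ^ 2)) :
    ∑ j : Fin k, (|lam (Fin.castLE hk j)| - |q j|) ^ 2 ≤
      s ^ 2 * ∑ j : Fin k, (lam (Fin.castLE hk j)) ^ 2 := by
  have hUU : U * Uᵀ = 1 := mul_eq_one_comm.mp hU
  set W : Matrix (Fin n) (Fin k) ℝ := Uᵀ * X with hWdef
  have hW : Wᵀ * W = 1 := by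
    rw [hWdef, Matrix.transpose_mul, Matrix.transpose_transpose, Matrix.mul_assoc,
      ← Matrix.mul_assoc U, hUU, Matrix.one_mul, hX]
  have horthU : ∀ j j' : Fin n, ∑ r, U r j * U r j' = if j = j' then 1 else 0 := by
    intro j j'
    have := congrFun (congrFun hU j) j'
    rw [Matrix.mul_apply] at this
    simpa [Matrix.transpose_apply, Matrix.one_apply] using this
  have horthX : ∀ i i' : Fin k, ∑ r, X r i * X r i' = if i = i' then 1 else 0 := by
    intro i i'
    have := congrFun (congrFun hX i) i'
    rw [Matrix.mul_apply] at this
    simpa [Matrix.transpose_apply, Matrix.one_apply] using this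
  have hMe : ∀ r c, M r c = ∑ j, (U r j * lam j) * U c j := by
    intro r c
    rw [hM, Matrix.mul_apply]
    refine Finset.sum_congr rfl fun j _ => ?_
    rw [Matrix.mul_diagonal, Matrix.transpose_apply]
  have hHe : ∀ r c, H r c = ∑ i, (q i * X r i) * X c i := by
    intro r c
    rw [hH]
    simp [Matrix.sum_apply, Matrix.vecMulVec_apply, mul_assoc]
  have hWe : ∀ (j : Fin n) (i : Fin k), W j i = ∑ r, U r j * X r i := by
    intro j i
    rw [hWdef, Matrix.mul_apply]
    simp [Matrix.transpose_apply]
  -- q in terms of W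
  have hq' : ∀ i, q i = ∑ j, lam j * (W j i) ^ 2 := by
    intro i
    rw [hq i]
    simp only [dotProduct, Matrix.mulVec, dotProduct]
    calc ∑ r, X r i * ∑ c, M r c * X c i
        = ∑ r, ∑ c, ∑ j, (U r j * X r i) * (U c j * X c i) * lam j := by
          refine Finset.sum_congr rfl fun r _ => ?_
          rw [Finset.mul_sum]
          refine Finset.sum_congr rfl fun c _ => ?_
          rw [hMe r c, Finset.sum_mul, Finset.mul_sum]
          exact Finset.sum_congr rfl fun j _ => by ring
      _ = ∑ r, ∑ j, ∑ c, (U r j * X r i) * (U c j * X c i) * lam j :=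
          Finset.sum_congr rfl fun r _ => Finset.sum_comm
      _ = ∑ j, ∑ r, ∑ c, (U r j * X r i) * (U c j * X c i) * lam j := Finset.sum_comm
      _ = ∑ j, lam j * (W j i) ^ 2 := by
          refine Finset.sum_congr rfl fun j _ => ?_
          rw [hWe, sq, Finset.sum_mul_sum, Finset.mul_sum]
          refine Finset.sum_congr rfl fun r _ => ?_
          rw [Finset.mul_sum]
          exact Finset.sum_congr rfl fun c _ => by ring
  -- Frobenius quantities
  set T : ℝ := ∑ j, (lam j) ^ 2 with hT
  set Q : ℝ := ∑ i, (q i) ^ 2 with hQ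
  set L : ℝ := ∑ j : Fin k, (lam (Fin.castLE hk j)) ^ 2 with hL
  -- ‖M‖² = T
  have hMF : ∑ r, ∑ c, (M r c) ^ 2 = T := by
    calc ∑ r, ∑ c, (M r c) ^ 2
        = ∑ r, ∑ c, (∑ j, (U r j * lam j) * U c j) * (∑ j', (U r j' * lam j') * U c j') := by
          refine Finset.sum_congr rfl fun r _ => Finset.sum_congr rfl fun c _ => ?_
          rw [hMe, sq]
      _ = ∑ j, ∑ j', (∑ r, (U r j * lam j) * (U r j' * lam j'))
            * (∑ c, U c j * U c j') := double_sum_prod' _ _ _ _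
      _ = ∑ j, (lam j) ^ 2 := by
          refine Finset.sum_congr rfl fun j _ => ?_
          have e1 : ∀ j' : Fin n, (∑ r, (U r j * lam j) * (U r j' * lam j'))
              = lam j * lam j' * ∑ r, U r j * U r j' := by
            intro j'
            rw [Finset.mul_sum]
            exact Finset.sum_congr rfl fun r _ => by ring
          calc ∑ j', (∑ r, (U r j * lam j) * (U r j' * lam j')) * (∑ c, U c j * U c j')
              = ∑ j', (lam j * lam j' * if j = j' then 1 else 0) * (if j = j' then 1 else 0) := by
                refine Finset.sum_congr rfl fun j' _ => ?_
                rw [e1 j', horthU j j']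
            _ = ∑ j', if j = j' then lam j * lam j' else 0 := by
                refine Finset.sum_congr rfl fun j' _ => ?_
                split_ifs with h <;> ring
            _ = (lam j) ^ 2 := by
                rw [Finset.sum_ite_eq]
                simp [sq]
  -- ⟨M, H⟩ = Q
  have hMH : ∑ r, ∑ c, M r c * H r c = Q := by
    calc ∑ r, ∑ c, M r c * H r c
        = ∑ r, ∑ c, (∑ j, (U r j * lam j) * U c j) * (∑ i, (q i * X r i) * X c i) := by
          refine Finset.sum_congr rfl fun r _ => Finset.sum_congr rfl fun c _ => ?_
          rw [hMe, hHe]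
      _ = ∑ j, ∑ i, (∑ r, (U r j * lam j) * (q i * X r i)) * (∑ c, U c j * X c i) :=
          double_sum_prod' _ _ _ _
      _ = ∑ j, ∑ i, lam j * q i * (W j i) ^ 2 := by
          refine Finset.sum_congr rfl fun j _ => Finset.sum_congr rfl fun i _ => ?_
          have e1 : (∑ r, (U r j * lam j) * (q i * X r i)) = lam j * q i * W j i := by
            rw [hWe, Finset.mul_sum]
            exact Finset.sum_congr rfl fun r _ => by ring
          rw [e1, ← hWe j i, sq]
          ring
      _ = ∑ i, q i * ∑ j, lam j * (W j i) ^ 2 := by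
          rw [Finset.sum_comm]
          refine Finset.sum_congr rfl fun i _ => ?_
          rw [Finset.mul_sum]
          exact Finset.sum_congr rfl fun j _ => by ring
      _ = Q := by
          refine Finset.sum_congr rfl fun i _ => ?_
          rw [← hq' i, sq]
  -- ‖H‖² = Q
  have hHH : ∑ r, ∑ c, (H r c) ^ 2 = Q := by
    calc ∑ r, ∑ c, (H r c) ^ 2
        = ∑ r, ∑ c, (∑ i, (q i * X r i) * X c i) * (∑ i', (q i' * X r i') * X c i') := by
          refine Finset.sum_congr rfl fun r _ => Finset.sum_congr rfl fun c _ => ?_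
          rw [hHe, sq]
      _ = ∑ i, ∑ i', (∑ r, (q i * X r i) * (q i' * X r i')) * (∑ c, X c i * X c i') :=
          double_sum_prod' _ _ _ _
      _ = Q := by
          refine Finset.sum_congr rfl fun i _ => ?_
          have e1 : ∀ i' : Fin k, (∑ r, (q i * X r i) * (q i' * X r i'))
              = q i * q i' * ∑ r, X r i * X r i' := by
            intro i'
            rw [Finset.mul_sum]
            exact Finset.sum_congr rfl fun r _ => by ring
          calc ∑ i', (∑ r, (q i * X r i) * (q i' * X r i')) * (∑ c, X c i * X c i')
              = ∑ i', (q i * q i' * if i = i' then 1 else 0) * (if i = i' then 1 else 0) := by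
                refine Finset.sum_congr rfl fun i' _ => ?_
                rw [e1 i', horthX i i']
            _ = ∑ i', if i = i' then q i * q i' else 0 := by
                refine Finset.sum_congr rfl fun i' _ => ?_
                split_ifs with h <;> ring
            _ = (q i) ^ 2 := by
                rw [Finset.sum_ite_eq]
                simp [sq]
  -- ‖M - H‖² = T - Q
  have hD : ∑ r, ∑ c, (M r c - H r c) ^ 2 = T - Q := by
    have e1 : ∑ r, ∑ c, (M r c - H r c) ^ 2
        = (∑ r, ∑ c, (M r c) ^ 2) - 2 * (∑ r, ∑ c, M r c * H r c) + ∑ r, ∑ c, (H r c) ^ 2 := by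
      simp only [Finset.mul_sum, ← Finset.sum_sub_distrib, ← Finset.sum_add_distrib]
      exact Finset.sum_congr rfl fun r _ => Finset.sum_congr rfl fun c _ => by ring
    rw [e1, hMF, hMH, hHH]
    ring
  -- T > 0
  have hT0 : 0 < T := by
    rcases lt_or_eq_of_le (Finset.sum_nonneg fun j (_ : j ∈ univ) => sq_nonneg (lam j)) with h | h
    · exact h
    · exfalso
      apply hM0
      have hMF0 : ∑ r, ∑ c, (M r c) ^ 2 = 0 := by rw [hMF, hT]; exact h.symm
      have houter := (Finset.sum_eq_zero_iff_of_nonneg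
        (fun r (_ : r ∈ univ) => Finset.sum_nonneg fun c _ => sq_nonneg (M r c))).mp hMF0
      ext r c
      have hinner := (Finset.sum_eq_zero_iff_of_nonneg
        (fun c (_ : c ∈ univ) => sq_nonneg (M r c))).mp (houter r (mem_univ r))
      have := hinner c (mem_univ c)
      simpa using pow_eq_zero_iff (n := 2) (by norm_num) |>.mp this
  have hQ0 : 0 ≤ Q := Finset.sum_nonneg fun i _ => sq_nonneg (q i)
  have hTQ : 0 ≤ T - Q := by
    rw [← hD]
    exact Finset.sum_nonneg fun r _ => Finset.sum_nonneg fun c _ => sq_nonneg _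
  -- s² = (T - Q)/T
  have hs2 : s ^ 2 = (T - Q) / T := by
    rw [hs, div_pow, Real.sq_sqrt (by rw [hD]; exact hTQ),
      Real.sq_sqrt (by rw [hMF]; exact le_of_lt hT0), hD, hMF]
  -- L ≤ T
  have hLT : L ≤ T := by
    rw [hL, hT, ← sum_filter_lt_eq' n k hk (fun j => (lam j) ^ 2)]
    exact Finset.sum_le_sum_of_subset_of_nonneg (Finset.filter_subset _ _)
      (fun j _ _ => sq_nonneg (lam j))
  -- projection diagonal bound : ∑ i, (W j i)^2 ≤ 1
  have hproj : ∀ j : Fin n, ∑ i, (W j i) ^ 2 ≤ 1 := by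
    intro j
    set P : Matrix (Fin n) (Fin n) ℝ := W * Wᵀ with hPdef
    have hPP : P * P = P := by
      rw [hPdef, Matrix.mul_assoc, ← Matrix.mul_assoc Wᵀ, hW, Matrix.one_mul]
    have hPsymm : ∀ l j' : Fin n, P l j' = P j' l := by
      intro l j'
      rw [hPdef, Matrix.mul_apply, Matrix.mul_apply]
      exact Finset.sum_congr rfl fun i _ => by
        simp only [Matrix.transpose_apply]; ring
    have hPjj : P j j = ∑ i, (W j i) ^ 2 := by
      rw [hPdef, Matrix.mul_apply]
      exact Finset.sum_congr rfl fun i _ => by rw [Matrix.transpose_apply, sq]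
    have hsq : (P j j) ^ 2 ≤ P j j := by
      conv_rhs => rw [← hPP]
      rw [Matrix.mul_apply]
      calc (P j j) ^ 2 ≤ ∑ l, (P j l) ^ 2 :=
            Finset.single_le_sum (fun l (_ : l ∈ univ) => sq_nonneg (P j l)) (mem_univ j)
        _ = ∑ l, P j l * P l j := Finset.sum_congr rfl fun l _ => by
            rw [hPsymm l j, sq]
    have hP0 : 0 ≤ P j j := by
      rw [hPjj]; exact Finset.sum_nonneg fun i _ => sq_nonneg _
    rw [← hPjj]
    nlinarith
  -- column norms of W : ∑ j, (W j i)^2 = 1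
  have hcol : ∀ i : Fin k, ∑ j, (W j i) ^ 2 = 1 := by
    intro i
    have := congrFun (congrFun hW i) i
    rw [Matrix.mul_apply] at this
    rw [Matrix.one_apply_eq] at this
    rw [← this]
    exact Finset.sum_congr rfl fun j _ => by rw [Matrix.transpose_apply, sq]
  -- the majorization inequality
  have hmaj : ∀ m, m ≤ k →
      ∑ i ∈ univ.filter (fun i : Fin k => (i:ℕ) < m), |q i|
        ≤ ∑ j ∈ univ.filter (fun j : Fin n => (j:ℕ) < m), |lam j| := by
    intro m hm
    set c : Fin n → ℝ := fun j => ∑ i ∈ univ.filter (fun i : Fin k => (i:ℕ) < m), (W j i) ^ 2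
      with hc
    have step1 : ∑ i ∈ univ.filter (fun i : Fin k => (i:ℕ) < m), |q i|
        ≤ ∑ j, |lam j| * c j := by
      calc ∑ i ∈ univ.filter (fun i : Fin k => (i:ℕ) < m), |q i|
          ≤ ∑ i ∈ univ.filter (fun i : Fin k => (i:ℕ) < m), ∑ j, |lam j| * (W j i) ^ 2 := by
            refine Finset.sum_le_sum fun i _ => ?_
            rw [hq' i]
            calc |∑ j, lam j * (W j i) ^ 2| ≤ ∑ j, |lam j * (W j i) ^ 2| :=
                  Finset.abs_sum_le_sum_abs _ _
              _ = ∑ j, |lam j| * (W j i) ^ 2 := Finset.sum_congr rfl fun j _ => by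
                  rw [abs_mul, abs_of_nonneg (sq_nonneg (W j i))]
        _ = ∑ j, |lam j| * c j := by
            rw [Finset.sum_comm]
            exact Finset.sum_congr rfl fun j _ => by rw [hc, Finset.mul_sum]
    have hc0 : ∀ j, 0 ≤ c j := fun j => Finset.sum_nonneg fun i _ => sq_nonneg _
    have hc1 : ∀ j, c j ≤ 1 := by
      intro j
      calc c j ≤ ∑ i, (W j i) ^ 2 :=
            Finset.sum_le_sum_of_subset_of_nonneg (Finset.filter_subset _ _)
              (fun i _ _ => sq_nonneg _)
        _ ≤ 1 := hproj j
    have hcs : ∑ j, c j = (m : ℝ) := by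
      rw [hc]
      rw [Finset.sum_comm]
      calc ∑ i ∈ univ.filter (fun i : Fin k => (i:ℕ) < m), ∑ j, (W j i) ^ 2
          = ∑ i ∈ univ.filter (fun i : Fin k => (i:ℕ) < m), (1 : ℝ) :=
            Finset.sum_congr rfl fun i _ => hcol i
        _ = (m : ℝ) := by rw [Finset.sum_const, card_filter_lt' k m hm, nsmul_eq_mul, mul_one]
    exact le_trans step1 (rearr' n m (le_trans hm hk) (fun j => |lam j|) c hmono
      (fun j => abs_nonneg _) hc0 hc1 hcs)
  -- Abel: ∑ b² ≤ ∑ a b  over Fin k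
  set A : ℕ → ℝ := fun i => if h : i < n then |lam ⟨i, h⟩| else 0 with hA
  set B : ℕ → ℝ := fun i => if h : i < k then |q ⟨i, h⟩| else 0 with hB
  have habel : 0 ≤ ∑ i ∈ Finset.range k, (A i - B i) * B i := by
    apply abel_lemma' k A B
    · intro i hi
      simp only [hB]
      split_ifs <;> first | exact abs_nonneg _ | exact le_rfl
    · intro i j hij hj
      simp only [hB]
      rw [dif_pos hj, dif_pos (lt_of_le_of_lt hij hj)]
      exact hqmono ⟨i, lt_of_le_of_lt hij hj⟩ ⟨j, hj⟩ hij
    · intro m hm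
      simp only [hA, hB]
      rw [sum_range_dite' k m hm (fun i => |q i|),
        sum_range_dite' n m (le_trans hm hk) (fun j => |lam j|)]
      exact hmaj m hm
  have habel' : 0 ≤ ∑ j : Fin k, (|lam (Fin.castLE hk j)| - |q j|) * |q j| := by
    have econv : ∑ i ∈ Finset.range k, (A i - B i) * B i
        = ∑ j : Fin k, (|lam (Fin.castLE hk j)| - |q j|) * |q j| := by
      rw [← Fin.sum_univ_eq_sum_range (fun i => (A i - B i) * B i) k]
      refine Finset.sum_congr rfl fun j _ => ?_
      simp only [hA, hB]
      rw [dif_pos (lt_of_lt_of_le j.isLt hk), dif_pos j.isLt]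
      rfl
    rw [← econv]
    exact habel
  -- LHS ≤ L - Q
  have hLHS : ∑ j : Fin k, (|lam (Fin.castLE hk j)| - |q j|) ^ 2 ≤ L - Q := by
    have e1 : ∑ j : Fin k, (|lam (Fin.castLE hk j)| - |q j|) ^ 2
        = L - Q - 2 * ∑ j : Fin k, (|lam (Fin.castLE hk j)| - |q j|) * |q j| := by
      rw [hL, hQ, Finset.mul_sum, ← Finset.sum_sub_distrib, ← Finset.sum_sub_distrib]
      refine Finset.sum_congr rfl fun j _ => ?_
      have h1 : |lam (Fin.castLE hk j)| ^ 2 = (lam (Fin.castLE hk j)) ^ 2 := sq_abs _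
      have h2 : |q j| ^ 2 = (q j) ^ 2 := sq_abs _
      nlinarith [h1, h2]
    rw [e1]
    linarith
  -- final
  rw [hs2]
  have hfinal : L - Q ≤ (T - Q) / T * L := by
    rw [div_mul_eq_mul_div, le_div_iff₀ hT0]
    nlinarith [mul_nonneg hQ0 (sub_nonneg.mpr hLT)]
  exact le_trans hLHS hfinal
end

section
/- Let M = UΛUᵀ be symmetric with eigenvalues ordered by nonincreasing modulus, U = [U₁, U₂] with U₁ ∈ ℝ^{n×k} containing eigenvectors of the k leading eigenvalues, and suppose λ_k ≠ 0. Let X ∈ ℝ^{n×k} have orthonormal columns χ₁,…,χ_k and X_⊥ ∈ ℝ^{n×(n-k)} complete X to an orthogonal matrix. Then ‖U₁ᵀX_⊥‖_F² ≤ s² ‖M‖_F²/λ_k² − ∑_{i=1}^k ‖Mχᵢ − (χᵢᵀMχᵢ)χᵢ‖₂²/λ_k², where s = ‖M − H‖_F/‖M‖_F and H = ∑ᵢ (χᵢᵀMχᵢ)χᵢχᵢᵀ. -/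
open Matrix Finset

lemma frob_eq_trace {a b : Type*} [Fintype a] [Fintype b]
    (A : Matrix a b ℝ) : ∑ r, ∑ c, (A r c)^2 = (Aᵀ * A).trace := by
  simp [Matrix.trace, Matrix.mul_apply, Matrix.diag, pow_two]
  exact Finset.sum_comm

lemma frob_mul_orth {a b : Type*} [Fintype a] [Fintype b] [DecidableEq a]
    (U : Matrix a a ℝ) (hU : Uᵀ * U = 1) (A : Matrix a b ℝ) :
    ∑ r, ∑ c, ((U * A) r c)^2 = ∑ r, ∑ c, (A r c)^2 := by
  rw [frob_eq_trace, frob_eq_trace, Matrix.transpose_mul, Matrix.mul_assoc,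
    ← Matrix.mul_assoc Uᵀ, hU, Matrix.one_mul]

lemma frob_split {n k m : Type*} [Fintype n] [Fintype k] [Fintype m] [DecidableEq n]
    (A : Matrix n n ℝ) (X : Matrix n k ℝ) (Xp : Matrix n m ℝ)
    (hcomplete : X * Xᵀ + Xp * Xpᵀ = 1) :
    ∑ r, ∑ c, (A r c)^2 =
      (∑ r, ∑ c, ((A * X) r c)^2) + (∑ r, ∑ c, ((A * Xp) r c)^2) := by
  rw [frob_eq_trace, frob_eq_trace, frob_eq_trace, Matrix.transpose_mul,
    Matrix.transpose_mul, Matrix.mul_assoc, Matrix.mul_assoc, ← Matrix.mul_assoc Aᵀ,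
    ← Matrix.mul_assoc Aᵀ, Matrix.trace_mul_comm (Xᵀ), Matrix.trace_mul_comm (Xpᵀ)]
  simp only [Matrix.mul_assoc]
  rw [← Matrix.trace_add, ← Matrix.mul_add, ← Matrix.mul_add, hcomplete, Matrix.mul_one]

lemma frob_diag_mul {a b : Type*} [Fintype a] [Fintype b] [DecidableEq a]
    (d : a → ℝ) (W : Matrix a b ℝ) :
    ∑ r, ∑ c, ((Matrix.diagonal d * W) r c)^2 = ∑ r, (d r)^2 * ∑ c, (W r c)^2 := by
  refine Finset.sum_congr rfl fun r _ => ?_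
  rw [Finset.mul_sum]
  refine Finset.sum_congr rfl fun c _ => ?_
  rw [Matrix.diagonal_mul, mul_pow]

/-- Eigenspace localization bound:
`‖U₁ᵀX⊥‖_F² ≤ s²‖M‖_F²/λₖ² − ∑ᵢ ‖Mχᵢ − (χᵢᵀMχᵢ)χᵢ‖₂²/λₖ²`. -/
theorem eigenspace_sin_theta_bound
    (n k m : ℕ) (hk0 : 0 < k) (hkm : k + m = n)
    (U : Matrix (Fin n) (Fin n) ℝ) (hU : Uᵀ * U = 1)
    (lam : Fin n → ℝ)
    (hmono : ∀ i j : Fin n, i ≤ j → |lam j| ≤ |lam i|)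
    (M : Matrix (Fin n) (Fin n) ℝ)
    (hM : M = U * Matrix.diagonal lam * Uᵀ)
    (lamk : ℝ) (hlamk : lamk = lam ⟨k - 1, by omega⟩) (hlamk0 : lamk ≠ 0)
    (U1 : Matrix (Fin n) (Fin k) ℝ)
    (hU1 : ∀ (i : Fin n) (j : Fin k), U1 i j = U i (Fin.castLE (by omega) j))
    (X : Matrix (Fin n) (Fin k) ℝ) (Xp : Matrix (Fin n) (Fin m) ℝ)
    (hX : Xᵀ * X = 1) (hXp : Xpᵀ * Xp = 1) (hXXp : Xᵀ * Xp = 0)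
    (hcomplete : X * Xᵀ + Xp * Xpᵀ = 1)
    (q : Fin k → ℝ)
    (hq : ∀ i : Fin k, q i = (fun r => X r i) ⬝ᵥ (M *ᵥ fun r => X r i))
    (H : Matrix (Fin n) (Fin n) ℝ)
    (hH : H = ∑ i : Fin k, q i • vecMulVec (fun r => X r i) (fun r => X r i))
    (s : ℝ)
    (hs : s = Real.sqrt (∑ r, ∑ c, (M r c - H r c) ^ 2) /
              Real.sqrt (∑ r, ∑ c, (M r c) ^ 2)) :
    ∑ r, ∑ c, ((U1ᵀ * Xp) r c) ^ 2 ≤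
      s ^ 2 * (∑ r, ∑ c, (M r c) ^ 2) / lamk ^ 2 -
        ∑ i : Fin k,
          (∑ r, ((M *ᵥ fun r' => X r' i) r - q i * X r i) ^ 2) / lamk ^ 2 := by
  have hle : k ≤ n := by omega
  set FM : ℝ := ∑ r, ∑ c, (M r c) ^ 2 with hFM
  set FR : ℝ := ∑ r, ∑ c, (M r c - H r c) ^ 2 with hFR
  set W : Matrix (Fin n) (Fin m) ℝ := Uᵀ * Xp with hW
  -- column-orthonormality of X, and X ⊥ Xp, as sums
  have hXcol : ∀ i j : Fin k, (∑ c, X c i * X c j) = if i = j then (1:ℝ) else 0 := by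
    intro i j
    have := congrArg (fun A => A i j) hX
    simpa [Matrix.mul_apply, Matrix.one_apply, Matrix.transpose_apply] using this
  have hXXpcol : ∀ (i : Fin k) (j : Fin m), (∑ c, X c i * Xp c j) = 0 := by
    intro i j
    have := congrArg (fun A => A i j) hXXp
    simpa [Matrix.mul_apply, Matrix.transpose_apply] using this
  -- H * X and H * Xp
  have hHX : ∀ (r : Fin n) (j : Fin k), (H * X) r j = q j * X r j := by
    intro r j
    simp only [hH, Matrix.sum_apply, Matrix.smul_apply, Matrix.mul_apply,
      vecMulVec_apply, smul_eq_mul]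
    have hterm : ∀ c, (∑ i : Fin k, q i * (X r i * X c i)) * X c j
        = ∑ i : Fin k, (q i * X r i) * (X c i * X c j) := by
      intro c
      rw [Finset.sum_mul]
      exact Finset.sum_congr rfl fun i _ => by ring
    rw [Finset.sum_congr rfl fun c _ => hterm c, Finset.sum_comm]
    simp_rw [← Finset.mul_sum]
    simp [hXcol, mul_ite]
  have hHXp : ∀ (r : Fin n) (j : Fin m), (H * Xp) r j = 0 := by
    intro r j
    simp only [hH, Matrix.sum_apply, Matrix.smul_apply, Matrix.mul_apply,
      vecMulVec_apply, smul_eq_mul]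
    have hterm : ∀ c, (∑ i : Fin k, q i * (X r i * X c i)) * Xp c j
        = ∑ i : Fin k, (q i * X r i) * (X c i * Xp c j) := by
      intro c
      rw [Finset.sum_mul]
      exact Finset.sum_congr rfl fun i _ => by ring
    rw [Finset.sum_congr rfl fun c _ => hterm c, Finset.sum_comm]
    simp_rw [← Finset.mul_sum]
    simp [hXXpcol]
  -- (M - H) * Xp = M * Xp
  have hRXp : (M - H) * Xp = M * Xp := by
    ext r j
    simp [Matrix.sub_mul, Matrix.sub_apply, hHXp r j]
  -- the residual split
  have hsplit : FR = (∑ r, ∑ c, (((M - H) * X) r c)^2)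
      + (∑ r, ∑ c, (((M - H) * Xp) r c)^2) := by
    have := frob_split (M - H) X Xp hcomplete
    simpa [Matrix.sub_apply] using this
  -- ((M-H)*X) entries are the residual columns
  have hRXcol : (∑ r, ∑ c, (((M - H) * X) r c)^2)
      = ∑ i : Fin k, ∑ r, ((M *ᵥ fun r' => X r' i) r - q i * X r i) ^ 2 := by
    rw [Finset.sum_comm]
    refine Finset.sum_congr rfl fun i _ => Finset.sum_congr rfl fun r _ => ?_
    congr 1
    rw [Matrix.sub_mul, Matrix.sub_apply, hHX r i]
    congr 1
  -- Frobenius norm of M * Xp in terms of rows of W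
  have hMXpF : (∑ r, ∑ c, ((M * Xp) r c)^2) = ∑ i, (lam i)^2 * ∑ c, (W i c)^2 := by
    have h1 : M * Xp = U * (Matrix.diagonal lam * W) := by
      rw [hM, hW]; simp only [Matrix.mul_assoc]
    rw [h1, frob_mul_orth U hU, frob_diag_mul]
  -- Frobenius norm of M equals sum of squared eigenvalues
  have hUcol : ∀ i : Fin n, (∑ c, (U c i)^2) = 1 := by
    intro i
    have := congrArg (fun A => A i i) hU
    simpa [Matrix.mul_apply, Matrix.one_apply, Matrix.transpose_apply, pow_two] using this
  have hFMeig : FM = ∑ i, (lam i)^2 := by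
    have h1 : M = U * (Matrix.diagonal lam * Uᵀ) := by rw [hM, Matrix.mul_assoc]
    rw [hFM]
    conv_lhs => rw [h1]
    rw [frob_mul_orth U hU, frob_diag_mul]
    refine Finset.sum_congr rfl fun i _ => ?_
    simp [Matrix.transpose_apply, hUcol i]
  have hlamk2 : 0 < lamk ^ 2 := by positivity
  have hFMpos : 0 < FM := by
    rw [hFMeig]
    refine lt_of_lt_of_le ?_ (Finset.single_le_sum (f := fun i => (lam i)^2)
      (fun i _ => sq_nonneg _) (Finset.mem_univ ⟨k - 1, by omega⟩))
    simpa [← hlamk] using hlamk2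
  have hFRnn : 0 ≤ FR := Finset.sum_nonneg fun r _ => Finset.sum_nonneg fun c _ => sq_nonneg _
  have hs2 : s ^ 2 * FM = FR := by
    rw [hs, div_pow, Real.sq_sqrt hFRnn, Real.sq_sqrt (le_of_lt hFMpos),
      div_mul_cancel₀ _ (ne_of_gt hFMpos)]
  -- LHS rows are the first k rows of W
  have hLHS : (∑ r, ∑ c, ((U1ᵀ * Xp) r c) ^ 2)
      = ∑ j : Fin k, ∑ c, (W (Fin.castLE hle j) c)^2 := by
    refine Finset.sum_congr rfl fun j _ => Finset.sum_congr rfl fun c _ => ?_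
    congr 1
    simp [hW, Matrix.mul_apply, Matrix.transpose_apply, hU1]
  -- the key eigenvalue inequality
  have hkey : lamk ^ 2 * (∑ j : Fin k, ∑ c, (W (Fin.castLE hle j) c)^2)
      ≤ ∑ i, (lam i)^2 * ∑ c, (W i c)^2 := by
    rw [Finset.mul_sum]
    calc ∑ j : Fin k, lamk ^ 2 * ∑ c, (W (Fin.castLE hle j) c)^2
        ≤ ∑ j : Fin k, (lam (Fin.castLE hle j))^2 * ∑ c, (W (Fin.castLE hle j) c)^2 := by
          refine Finset.sum_le_sum fun j _ => ?_
          refine mul_le_mul_of_nonneg_right ?_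
            (Finset.sum_nonneg fun c _ => sq_nonneg _)
          have habs : |lam ⟨k - 1, by omega⟩| ≤ |lam (Fin.castLE hle j)| := by
            refine hmono _ _ ?_
            have hj := j.isLt
            rw [Fin.le_def]
            simp only [Fin.coe_castLE, Fin.val_mk]
            omega
          rw [hlamk, ← sq_abs, ← sq_abs (lam (Fin.castLE hle j))]
          exact pow_le_pow_left₀ (abs_nonneg _) habs 2
      _ = ∑ i ∈ Finset.univ.map (Fin.castLEEmb hle),
            (lam i)^2 * ∑ c, (W i c)^2 := by rw [Finset.sum_map]; rfl
      _ ≤ ∑ i, (lam i)^2 * ∑ c, (W i c)^2 := by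
          refine Finset.sum_le_sum_of_subset_of_nonneg (Finset.subset_univ _)
            fun i _ _ => mul_nonneg (sq_nonneg _)
              (Finset.sum_nonneg fun c _ => sq_nonneg _)
  -- put it together
  rw [← Finset.sum_div, hLHS, hs2, div_sub_div_same]
  have hfin : FR - (∑ i : Fin k, ∑ r, ((M *ᵥ fun r' => X r' i) r - q i * X r i) ^ 2)
      = ∑ i, (lam i)^2 * ∑ c, (W i c)^2 := by
    rw [hsplit, hRXcol, hRXp, hMXpF]; ring
  rw [hfin, le_div_iff₀ hlamk2, mul_comm]
  exact hkey
end
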